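/- For all integers n ≥ k ≥ 0, U_r(n,k) = Σ_{l=k}^{n} C(n,l) · U(l,k) · r^{n-l}, where U(l,k) = U_0(l,k) is the central factorial number with even indices of the second kind. -/
import Mathlib


/-- `centralU r n k` is the r-central factorial number with even indices of the second kind. -/
def centralU (r : ℕ) : ℕ → ℕ → ℤ
  | 0, 0 => 1
  | 0, _ + 1 => 0
  | n + 1, 0 => (r : ℤ) ^ (n + 1)
  | n + 1, k + 1 => centralU r n k + (((k : ℤ) + 1) ^ 2 + r) * centralU r n (k + 1)

lemma centralU_eq_zero_of_lt (r : ℕ) : ∀ n k : ℕ, n < k → centralU r n k = 0 := by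
  intro n
  induction n with
  | zero =>
    intro k hk
    cases k with
    | zero => omega
    | succ j => rfl
  | succ n ih =>
    intro k hk
    cases k with
    | zero => omega
    | succ j =>
      show centralU r n j + (((j : ℤ) + 1) ^ 2 + r) * centralU r n (j + 1) = 0
      rw [ih j (by omega), ih (j+1) (by omega)]
      ring

lemma centralU_zero_succ (m k : ℕ) : centralU 0 (m+1) (k+1)
    = centralU 0 m k + (((k:ℤ)+1)^2) * centralU 0 m (k+1) := by
  show centralU 0 m k + (((k:ℤ)+1)^2 + ((0:ℕ):ℤ)) * centralU 0 m (k+1) = _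
  push_cast; ring

theorem centralU_eq_sum_centralU_zero (r n k : ℕ) (h : k ≤ n) :
    centralU r n k =
      ∑ l ∈ Finset.Icc k n, (n.choose l : ℤ) * centralU 0 l k * (r : ℤ) ^ (n - l) := by
  induction n generalizing k with
  | zero =>
    interval_cases k
    simp [centralU]
  | succ n ih =>
    cases k with
    | zero =>
      show (r : ℤ) ^ (n + 1) = _
      rw [Finset.sum_eq_single_of_mem 0 (by simp)]
      · simp [centralU]
      · intro l hl hl0
        obtain ⟨m, rfl⟩ : ∃ m, l = m + 1 := ⟨l - 1, by omega⟩
        have : centralU 0 (m+1) 0 = (0 : ℤ) ^ (m+1) := by norm_num [centralU]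
        simp [this]
    | succ k =>
      have hk : k ≤ n := by omega
      have hB : centralU r n (k+1) =
          ∑ l ∈ Finset.Icc (k+1) n, (n.choose l : ℤ) * centralU 0 l (k+1) * (r:ℤ)^(n-l) := by
        rcases Nat.lt_or_ge n (k+1) with hlt | hge
        · rw [Finset.Icc_eq_empty (by omega), centralU_eq_zero_of_lt r n (k+1) hlt]; simp
        · exact ih (k+1) hge
      show centralU r n k + (((k:ℤ)+1)^2 + r) * centralU r n (k+1) = _
      rw [ih k hk, hB]
      -- RHS: reindex
      rw [show Finset.Icc (k+1) (n+1) = Finset.map (addRightEmbedding 1) (Finset.Icc k n) from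
        (Finset.map_add_right_Icc k n 1).symm, Finset.sum_map]
      have hterm : ∀ m ∈ Finset.Icc k n,
          (((n+1).choose (addRightEmbedding 1 m) : ℤ) * centralU 0 (addRightEmbedding 1 m) (k+1)
            * (r:ℤ)^(n+1 - (addRightEmbedding 1 m)))
          = ((n.choose m : ℤ) * centralU 0 m k * (r:ℤ)^(n-m))
            + (((k:ℤ)+1)^2) * ((n.choose m : ℤ) * centralU 0 m (k+1) * (r:ℤ)^(n-m))
            + ((n.choose (m+1) : ℤ) * centralU 0 (m+1) (k+1) * (r:ℤ)^(n-m)) := by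
        intro m hm
        simp only [addRightEmbedding, Function.Embedding.coeFn_mk]
        have h1 : n + 1 - (m + 1) = n - m := by omega
        rw [h1, Nat.choose_succ_succ, centralU_zero_succ]
        push_cast
        ring
      rw [Finset.sum_congr rfl hterm, Finset.sum_add_distrib, Finset.sum_add_distrib,
        ← Finset.mul_sum]
      -- second sum: drop the m = k term
      have hT : ∑ m ∈ Finset.Icc (k+1) n, (n.choose m : ℤ) * centralU 0 m (k+1) * (r:ℤ)^(n-m)
          = ∑ m ∈ Finset.Icc k n, (n.choose m : ℤ) * centralU 0 m (k+1) * (r:ℤ)^(n-m) := by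
        apply Finset.sum_subset (Finset.Icc_subset_Icc_left (by omega))
        intro x hx hnx
        simp only [Finset.mem_Icc] at hx hnx
        have hxk : x = k := by omega
        rw [hxk, centralU_eq_zero_of_lt 0 k (k+1) (by omega)]
        ring
      -- third sum equals r * (sum over Icc (k+1) n)
      have hE : ∑ m ∈ Finset.Icc k n, (n.choose (m+1) : ℤ) * centralU 0 (m+1) (k+1) * (r:ℤ)^(n-m)
          = (r:ℤ) * ∑ l ∈ Finset.Icc (k+1) n, (n.choose l : ℤ) * centralU 0 l (k+1) * (r:ℤ)^(n-l) := by
        have step1 : ∑ m ∈ Finset.Icc k n, (n.choose (m+1) : ℤ) * centralU 0 (m+1) (k+1) * (r:ℤ)^(n-m)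
            = ∑ l ∈ Finset.Icc (k+1) (n+1), (n.choose l : ℤ) * centralU 0 l (k+1) * (r:ℤ)^(n+1-l) := by
          rw [show Finset.Icc (k+1) (n+1) = Finset.map (addRightEmbedding 1) (Finset.Icc k n) from
            (Finset.map_add_right_Icc k n 1).symm, Finset.sum_map]
          apply Finset.sum_congr rfl
          intro m hm
          simp only [addRightEmbedding, Function.Embedding.coeFn_mk]
          have h1 : n + 1 - (m + 1) = n - m := by omega
          rw [h1]
        rw [step1, Finset.sum_Icc_succ_top (by omega), Nat.choose_succ_self]
        push_cast
        rw [Finset.mul_sum]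
        simp only [zero_mul, add_zero]
        apply Finset.sum_congr rfl
        intro l hl
        simp only [Finset.mem_Icc] at hl
        have h2 : n + 1 - l = (n - l) + 1 := by omega
        rw [h2, pow_succ]
        ring
      rw [← hT, hE]
      ring
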